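/- Let X = {a, b} be a two-point discrete metric space and f : X → X the homeomorphism swapping a and b (e.g. X = Bool and f = not). Then f has the two-sided limit shadowing property with gap 1, but f does not have the two-sided limit shadowing property (i.e. with gap 0). -/

import Mathlib

open Filter Topology

variable {X : Type*} [MetricSpace X]

/-- A two-sided limit pseudo-orbit: `d(f(x i), x (i+1)) → 0` as `|i| → ∞`. -/
def IsTwoSidedLimitPseudoOrbit (f : X ≃ X) (x : ℤ → X) : Prop :=
  Tendsto (fun i : ℤ => dist (f (x i)) (x (i + 1))) cofinite (𝓝 0)

/-- The sequence `x` is two-sided limit shadowed with gap `K`. -/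
def TwoSidedLimitShadowedWithGap (f : X ≃ X) (x : ℤ → X) (K : ℤ) : Prop :=
  ∃ y : X,
    Tendsto (fun i : ℤ => dist ((f ^ i) y) (x i)) atBot (𝓝 0) ∧
    Tendsto (fun i : ℤ => dist ((f ^ (K + i)) y) (x i)) atTop (𝓝 0)

/-- `f` has the two-sided limit shadowing property with gap `N`. -/
def TwoSidedLimitShadowingGapN (f : X ≃ X) (N : ℕ) : Prop :=
  ∀ x : ℤ → X, IsTwoSidedLimitPseudoOrbit f x →
    ∃ K : ℤ, |K| ≤ (N : ℤ) ∧ TwoSidedLimitShadowedWithGap f x K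

lemma aux_shift {Y : Type*} (g : Equiv.Perm Y) (m n : ℤ) (z : Y) :
    (g ^ m) ((g ^ n) z) = (g ^ (m + n)) z := by
  rw [zpow_add, Equiv.Perm.mul_apply]

lemma aux_right {Y : Type*} (g : Equiv.Perm Y) (x : ℤ → Y) (N : ℤ)
    (h : ∀ i, N ≤ i → g (x i) = x (i + 1)) :
    ∀ i, N ≤ i → x i = (g ^ (i - N)) (x N) := by
  refine Int.le_induction (by simp) ?_
  intro n hn ih
  rw [← h n hn, ih]
  have he : n + 1 - N = 1 + (n - N) := by ring
  rw [he, zpow_add, zpow_one, Equiv.Perm.mul_apply]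

lemma aux_left {Y : Type*} (g : Equiv.Perm Y) (x : ℤ → Y) (N : ℤ)
    (h : ∀ i, i ≤ N → g (x i) = x (i + 1)) :
    ∀ i, i ≤ N → x i = (g ^ (i - N)) (x N) := by
  refine Int.le_induction_down (by simp) ?_
  intro n hn ih
  have hh := h (n - 1) (by omega)
  rw [sub_add_cancel] at hh
  have hx1 : x (n - 1) = g⁻¹ (x n) := by
    rw [← hh, Equiv.Perm.inv_def, Equiv.symm_apply_apply]
  rw [hx1, ih]
  have hinv : (g⁻¹ : Equiv.Perm Y) = g ^ (-1 : ℤ) := by rw [zpow_neg_one]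
  rw [hinv, aux_shift]
  have he : -1 + (n - N) = n - 1 - N := by ring
  rw [he]

theorem stmt10 (a b : X) (hab : a ≠ b) (hX : ∀ x : X, x = a ∨ x = b)
    (f : X ≃ₜ X) (hfa : f a = b) (hfb : f b = a) :
    TwoSidedLimitShadowingGapN f.toEquiv 1 ∧
      ¬ TwoSidedLimitShadowingGapN f.toEquiv 0 := by
  set g := f.toEquiv with hgdef
  have hga : g a = b := hfa
  have hgb : g b = a := hfb
  have hdpos : 0 < dist a b := dist_pos.2 hab
  have hswap : ∀ u v : X, u ≠ v → g u = v := by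
    intro u v huv
    rcases hX u with rfl | rfl <;> rcases hX v with rfl | rfl <;> simp_all
  have hdle : ∀ u v : X, u ≠ v → dist a b ≤ dist u v := by
    intro u v huv
    rcases hX u with rfl | rfl <;> rcases hX v with rfl | rfl
    · exact absurd rfl huv
    · exact le_refl _
    · rw [dist_comm]
    · exact absurd rfl huv
  have tendsto_iff : ∀ (l : Filter ℤ) (u v : ℤ → X),
      Tendsto (fun i => dist (u i) (v i)) l (𝓝 0) ↔ ∀ᶠ i in l, u i = v i := by
    intro l u v
    constructor
    · intro h
      have h' := h.eventually (gt_mem_nhds hdpos)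
      filter_upwards [h'] with i hi
      by_contra hne
      exact absurd (hdle _ _ hne) (not_le.2 hi)
    · intro h
      have h0 : ∀ᶠ i in l, dist (u i) (v i) = 0 :=
        h.mono fun i hi => by rw [hi, dist_self]
      exact (tendsto_const_nhds : Tendsto (fun _ : ℤ => (0 : ℝ)) l (𝓝 0)).congr'
        (h0.mono fun i hi => hi.symm)
  have hstep : ∀ (m : ℤ) (z : X), (g ^ (m + 1)) z = g ((g ^ m) z) := by
    intro m z
    rw [add_comm, zpow_add, zpow_one, Equiv.Perm.mul_apply]
  constructor
  · -- gap 1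
    intro x hx
    rw [IsTwoSidedLimitPseudoOrbit, tendsto_iff, Int.cofinite_eq, eventually_sup] at hx
    obtain ⟨hbot, htop⟩ := hx
    obtain ⟨N₁, h₁⟩ := eventually_atBot.1 hbot
    obtain ⟨N₂, h₂⟩ := eventually_atTop.1 htop
    have hr : ∀ i, N₂ ≤ i → x i = (g ^ (i - N₂)) (x N₂) := aux_right g x N₂ fun i hi => h₂ i hi
    have hl : ∀ i, i ≤ N₁ → x i = (g ^ (i - N₁)) (x N₁) := aux_left g x N₁ fun i hi => h₁ i hi
    obtain ⟨y, hy⟩ : ∃ y, y = (g ^ (-N₁)) (x N₁) := ⟨_, rfl⟩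
    have hyl : ∀ i, i ≤ N₁ → (g ^ i) y = x i := by
      intro i hi
      rw [hl i hi, hy, aux_shift]
      have he : i + -N₁ = i - N₁ := by ring
      rw [he]
    have hbotT : Tendsto (fun i : ℤ => dist ((g ^ i) y) (x i)) atBot (𝓝 0) :=
      (tendsto_iff _ _ _).2 (eventually_atBot.2 ⟨N₁, fun i hi => hyl i hi⟩)
    by_cases hc : (g ^ N₂) y = x N₂
    · refine ⟨0, by norm_num, y, hbotT, (tendsto_iff _ _ _).2 (eventually_atTop.2 ⟨N₂, ?_⟩)⟩
      intro i hi
      rw [hr i hi, ← hc, aux_shift]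
      have he : i - N₂ + N₂ = 0 + i := by ring
      rw [he]
    · refine ⟨1, by norm_num, y, hbotT, (tendsto_iff _ _ _).2 (eventually_atTop.2 ⟨N₂, ?_⟩)⟩
      intro i hi
      have hc' : (g ^ (1 + N₂)) y = x N₂ := by
        rw [add_comm, hstep]
        exact hswap _ _ hc
      rw [hr i hi, ← hc', aux_shift]
      have he : i - N₂ + (1 + N₂) = 1 + i := by ring
      rw [he]
  · -- no gap 0
    intro hcon
    set x : ℤ → X := fun i => if 0 ≤ i then (g ^ (i + 1)) a else (g ^ i) a with hxdef
    have hpo : IsTwoSidedLimitPseudoOrbit g x := by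
      rw [IsTwoSidedLimitPseudoOrbit, tendsto_iff]
      refine Filter.eventually_cofinite.2 (Set.Finite.subset (Set.finite_singleton (-1)) ?_)
      intro i hi
      simp only [Set.mem_setOf_eq] at hi
      simp only [Set.mem_singleton_iff]
      by_contra hne
      apply hi
      by_cases h0 : 0 ≤ i
      · simp only [hxdef, if_pos h0, if_pos (by omega : (0:ℤ) ≤ i + 1)]
        exact (hstep (i + 1) a).symm
      · simp only [hxdef, if_neg h0, if_neg (by omega : ¬ (0:ℤ) ≤ i + 1)]
        exact (hstep i a).symm
    obtain ⟨K, hK, y, hyb, hyt⟩ := hcon x hpo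
    have hK0 : K = 0 := by
      have := abs_le.1 hK
      omega
    subst hK0
    rw [tendsto_iff] at hyb hyt
    obtain ⟨i, hile, hieq⟩ : ∃ i : ℤ, i ≤ -1 ∧ (g ^ i) y = x i := by
      obtain ⟨i, hi⟩ := ((eventually_le_atBot (-1 : ℤ)).and hyb).exists
      exact ⟨i, hi.1, hi.2⟩
    have hya : y = a := by
      rw [hxdef] at hieq
      simp only [if_neg (by omega : ¬ (0:ℤ) ≤ i)] at hieq
      exact (g ^ i).injective hieq
    obtain ⟨j, hjle, hjeq⟩ : ∃ j : ℤ, 0 ≤ j ∧ (g ^ (0 + j)) y = x j := by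
      obtain ⟨j, hj⟩ := ((eventually_ge_atTop (0 : ℤ)).and hyt).exists
      exact ⟨j, hj.1, hj.2⟩
    have hyb' : y = b := by
      rw [hxdef] at hjeq
      simp only [zero_add, if_pos hjle] at hjeq
      rw [zpow_add_one, Equiv.Perm.mul_apply] at hjeq
      have := (g ^ j).injective hjeq
      rw [this, hga]
    exact hab (hya ▸ hyb' ▸ rfl)
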